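/- Let d ≥ 2 and let φ be a C^d function on an interval containing s_1 ≤ s_2 ≤ … ≤ s_d. Let 𝒥_d(s_1,…,s_d; φ) denote the determinant of the d×d matrix whose j-th column is (1, s_j, s_j²/2!, …, s_j^{d−2}/(d−2)!, φ′(s_j))^T. Then ∂_{s_1} ⋯ ∂_{s_{d−1}} 𝒥_d(s_1,…,s_d; φ) = (−1)^{d+1} 𝒥_{d−1}(s_1,…,s_{d−1}; φ′). -/

import Mathlib

open MeasureTheory

/-- `𝒥_d(s;φ)`: determinant of the `d×d` matrix whose `j`-th column is
`(1, s_j, s_j²/2!, …, s_j^{d-2}/(d-2)!, φ'(s_j))ᵀ`. -/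
noncomputable def Jdet (d : ℕ) (φ : ℝ → ℝ) (s : Fin d → ℝ) : ℝ :=
  Matrix.det (Matrix.of fun i j : Fin d =>
    if (i : ℕ) + 1 < d then (s j) ^ (i : ℕ) / (Nat.factorial i) else deriv φ (s j))

/-- Partial derivative in the `i`-th coordinate. -/
noncomputable def pderivAt {d : ℕ} (i : Fin d) (F : (Fin d → ℝ) → ℝ) :
    (Fin d → ℝ) → ℝ :=
  fun s => deriv (fun x => F (Function.update s i x)) (s i)


noncomputable def Ent (d : ℕ) (φ : ℝ → ℝ) (i : ℕ) (x : ℝ) : ℝ :=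
  if i + 1 < d then x ^ i / (Nat.factorial i) else deriv φ x

noncomputable def Ent' (d : ℕ) (φ : ℝ → ℝ) (i : ℕ) (x : ℝ) : ℝ :=
  if i + 1 < d then (if i = 0 then 0 else x ^ (i - 1) / (Nat.factorial (i - 1)))
  else deriv (deriv φ) x

noncomputable def Mm (d : ℕ) (φ : ℝ → ℝ) (P : Fin d → Bool) (s : Fin d → ℝ) :
    Matrix (Fin d) (Fin d) ℝ :=
  Matrix.of fun i j => if P j then Ent' d φ (i : ℕ) (s j) else Ent d φ (i : ℕ) (s j)

lemma ent_hasDerivAt (d : ℕ) (φ : ℝ → ℝ) (i : ℕ) (x : ℝ)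
    (hx : DifferentiableAt ℝ (deriv φ) x) :
    HasDerivAt (fun y => Ent d φ i y) (Ent' d φ i x) x := by
  by_cases h : i + 1 < d
  · simp only [Ent, Ent', if_pos h]
    rcases i with _ | k
    · simpa using (hasDerivAt_pow 0 x).div_const (Nat.factorial 0 : ℝ)
    · have h2 := (hasDerivAt_pow (k + 1) x).div_const (Nat.factorial (k + 1) : ℝ)
      refine h2.congr_deriv ?_
      rw [if_neg (Nat.succ_ne_zero k)]
      simp only [Nat.succ_sub_one, Nat.factorial_succ]
      push_cast
      rw [mul_div_mul_left _ _ (by positivity : (k : ℝ) + 1 ≠ 0)]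
  · simp only [Ent, Ent', if_neg h]
    exact hx.hasDerivAt

noncomputable def detL {d : ℕ} (A : Matrix (Fin d) (Fin d) ℝ) (j : Fin d) :
    (Fin d → ℝ) →ₗ[ℝ] ℝ where
  toFun c := (A.updateCol j c).det
  map_add' u v := A.det_updateCol_add j u v
  map_smul' t u := by simpa using A.det_updateCol_smul j t u

lemma pderiv_det (d : ℕ) (φ : ℝ → ℝ) (P : Fin d → Bool) (j : Fin d)
    (hPj : P j = false) (s : Fin d → ℝ)
    (hd : DifferentiableAt ℝ (deriv φ) (s j)) :
    deriv (fun x => (Mm d φ P (Function.update s j x)).det) (s j)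
      = (Mm d φ (Function.update P j true) s).det := by
  set L : (Fin d → ℝ) →L[ℝ] ℝ := (detL (Mm d φ P s) j).toContinuousLinearMap with hL
  have hLc : ∀ c, L c = ((Mm d φ P s).updateCol j c).det := by
    intro c; simp [hL, detL]
  have hfun : ∀ x, (Mm d φ P (Function.update s j x)).det
      = L (fun i : Fin d => Ent d φ (i : ℕ) x) := by
    intro x
    rw [hLc]
    congr 1
    ext i j'
    by_cases h : j' = j
    · subst h
      simp [Mm, Matrix.updateCol_apply, hPj]
    · simp [Mm, Matrix.updateCol_apply, h, Function.update_of_ne h]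
  have hcol : HasDerivAt (fun x => (fun i : Fin d => Ent d φ (i : ℕ) x))
      (fun i : Fin d => Ent' d φ (i : ℕ) (s j)) (s j) :=
    hasDerivAt_pi.2 fun i => ent_hasDerivAt d φ i (s j) hd
  have hder : HasDerivAt (fun x => L (fun i : Fin d => Ent d φ (i : ℕ) x))
      (L (fun i : Fin d => Ent' d φ (i : ℕ) (s j))) (s j) :=
    L.hasFDerivAt.comp_hasDerivAt (s j) hcol
  have : deriv (fun x => (Mm d φ P (Function.update s j x)).det) (s j)
      = L (fun i : Fin d => Ent' d φ (i : ℕ) (s j)) := by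
    rw [funext hfun]
    exact hder.deriv
  rw [this, hLc]
  congr 1
  ext i j'
  by_cases h : j' = j
  · subst h
    simp [Mm, Matrix.updateCol_apply]
  · simp [Mm, Matrix.updateCol_apply, h, Function.update_of_ne h]

lemma fold_eq (d : ℕ) (φ : ℝ → ℝ) (A B : ℝ)
    (hd : ∀ x ∈ Set.Ioo A B, DifferentiableAt ℝ (deriv φ) x) :
    ∀ l : List (Fin d), l.Nodup → ∀ s : Fin d → ℝ, (∀ j, s j ∈ Set.Ioo A B) →
      (l.foldr pderivAt fun t => (Mm d φ (fun _ => false) t).det) s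
        = (Mm d φ (fun j => decide (j ∈ l)) s).det := by
  intro l
  induction l with
  | nil =>
    intro _ s _
    simp only [List.foldr_nil]
    congr 1
  | cons a l ih =>
    intro hnd s hsmem
    have hal : a ∉ l := (List.nodup_cons.1 hnd).1
    have hln : l.Nodup := (List.nodup_cons.1 hnd).2
    show deriv (fun x => (l.foldr pderivAt fun t => (Mm d φ (fun _ => false) t).det)
        (Function.update s a x)) (s a) = _
    have hev : (fun x => (l.foldr pderivAt fun t => (Mm d φ (fun _ => false) t).det)
          (Function.update s a x))
        =ᶠ[nhds (s a)]
        fun x => (Mm d φ (fun j => decide (j ∈ l)) (Function.update s a x)).det := by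
      filter_upwards [isOpen_Ioo.mem_nhds (hsmem a)] with x hx
      apply ih hln
      intro j
      by_cases h : j = a
      · subst h; simpa using hx
      · simpa [Function.update_of_ne h] using hsmem j
    rw [hev.deriv_eq]
    rw [pderiv_det d φ (fun j => decide (j ∈ l)) a (by simp [hal]) s (hd _ (hsmem a))]
    have hP : Function.update (fun j : Fin d => decide (j ∈ l)) a true
        = fun j : Fin d => decide (j ∈ a :: l) := by
      funext j
      by_cases h : j = a
      · subst h; simp
      · simp [Function.update_of_ne h, h]
    rw [hP]

/-- for `d = m+2 ≥ 2` and `φ` of class `C^d` on an interval containing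
`s_1 ≤ … ≤ s_d`, one has
`∂_{s_1} ⋯ ∂_{s_{d-1}} 𝒥_d(s;φ) = (-1)^{d+1} 𝒥_{d-1}(s_1,…,s_{d-1};φ')`. -/
theorem stmt3 (m : ℕ) (φ : ℝ → ℝ) (A B : ℝ)
    (hφ : ContDiffOn ℝ (m + 2) φ (Set.Ioo A B))
    (s : Fin (m + 2) → ℝ) (hs : Monotone s) (hmem : ∀ j, s j ∈ Set.Ioo A B) :
    (((List.finRange (m + 1)).map Fin.castSucc).foldr pderivAt (Jdet (m + 2) φ)) s
      = (-1 : ℝ) ^ (m + 3) * Jdet (m + 1) (deriv φ) (fun i => s i.castSucc) := by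
  have hd : ∀ x ∈ Set.Ioo A B, DifferentiableAt ℝ (deriv φ) x := by
    intro x hx
    have h1 : ContDiffOn ℝ 1 (deriv φ) (Set.Ioo A B) := by
      apply hφ.deriv_of_isOpen isOpen_Ioo
      exact_mod_cast le_add_self
    exact (h1.differentiableOn one_ne_zero).differentiableAt (isOpen_Ioo.mem_nhds hx)
  have hJ : Jdet (m + 2) φ = fun t => (Mm (m + 2) φ (fun _ => false) t).det := by
    funext t
    unfold Jdet Mm Ent
    rfl
  set l : List (Fin (m + 2)) := (List.finRange (m + 1)).map Fin.castSucc with hl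
  have hnd : l.Nodup := (List.nodup_finRange _).map (Fin.castSucc_injective _)
  have hmeml : ∀ j : Fin (m + 2), (j ∈ l) ↔ j ≠ Fin.last (m + 1) := by
    intro j
    simp only [hl, List.mem_map, List.mem_finRange, true_and]
    exact Fin.exists_castSucc_eq
  rw [hJ, fold_eq (m + 2) φ A B hd l hnd s hmem]
  have hPl : (fun j : Fin (m + 2) => decide (j ∈ l))
      = fun j : Fin (m + 2) => decide (j ≠ Fin.last (m + 1)) := by
    funext j
    exact decide_eq_decide.2 (hmeml j)
  rw [hPl]
  set N := Mm (m + 2) φ (fun j : Fin (m + 2) => decide (j ≠ Fin.last (m + 1))) s with hNdef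
  have h1 : ∀ b ∈ Finset.univ, b ≠ Fin.last (m + 1) →
      (-1 : ℝ) ^ (b : ℕ) * N 0 b * (N.submatrix Fin.succ b.succAbove).det = 0 := by
    intro b _ hb
    have h01 : (0 : ℕ) + 1 < m + 2 := by omega
    have : N 0 b = 0 := by simp [hNdef, Mm, Ent', hb, h01]
    rw [this]
    ring
  have h2 : Fin.last (m + 1) ∉ Finset.univ →
      (-1 : ℝ) ^ ((Fin.last (m + 1)) : ℕ) * N 0 (Fin.last (m + 1)) *
        (N.submatrix Fin.succ (Fin.last (m + 1)).succAbove).det = 0 :=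
    fun h => absurd (Finset.mem_univ _) h
  rw [Matrix.det_succ_row_zero, Finset.sum_eq_single (Fin.last (m + 1)) h1 h2]
  have h0 : N 0 (Fin.last (m + 1)) = 1 := by
    have h01 : (0 : ℕ) + 1 < m + 2 := by omega
    simp [hNdef, Mm, Ent, h01]
  rw [h0, Fin.succAbove_last, Fin.val_last]
  have hsub : N.submatrix Fin.succ Fin.castSucc
      = Matrix.of fun i j : Fin (m + 1) =>
          if (i : ℕ) + 1 < m + 1 then (s j.castSucc) ^ (i : ℕ) / (Nat.factorial i)
          else deriv (deriv φ) (s j.castSucc) := by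
    ext i j
    have hne : j.castSucc ≠ Fin.last (m + 1) := (Fin.castSucc_lt_last j).ne
    simp only [Matrix.submatrix_apply, hNdef, Mm, Matrix.of_apply, hne, decide_true,
      if_true, Ent', Fin.val_succ, Nat.add_sub_cancel, Nat.succ_ne_zero, if_false,
      ne_eq, not_false_eq_true]
    by_cases hc : (i : ℕ) + 1 + 1 < m + 2
    · rw [if_pos hc, if_pos (by omega : (i : ℕ) + 1 < m + 1)]
    · rw [if_neg hc, if_neg (by omega : ¬((i : ℕ) + 1 < m + 1))]
  rw [hsub]
  have hJ2 : (Matrix.of fun i j : Fin (m + 1) =>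
      if (i : ℕ) + 1 < m + 1 then (s j.castSucc) ^ (i : ℕ) / (Nat.factorial i)
      else deriv (deriv φ) (s j.castSucc)).det
      = Jdet (m + 1) (deriv φ) (fun i => s i.castSucc) := rfl
  rw [hJ2]
  have hsign : ((-1 : ℝ)) ^ (m + 3) = (-1 : ℝ) ^ (m + 1) := by
    rw [show m + 3 = (m + 1) + 2 from rfl, pow_add]
    norm_num
  rw [hsign]
  ring
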